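/- arXiv:1701.08220 — 4 statements merged into one kernel-verified Lean document; each statement's English description precedes it below -/
import Mathlib

section
/- Let A be a generalized Latin square of order n and let R be a set of r rows with r ≤ (n+1)/2. Then there exists a partial transversal of size r whose r cells lie in the rows of R (one cell in each row of R), in r distinct columns, with pairwise distinct symbols. -/
/-- A generalized Latin square of order `n`: each symbol appears at most once
in each row and at most once in each column. -/
def IsGLS {n : ℕ} (A : Fin n → Fin n → ℕ) : Prop :=
  (∀ i : Fin n, Function.Injective (A i)) ∧ (∀ j : Fin n, Function.Injective fun i => A i j)

/-- Multiplicity of a symbol `s`: number of cells of `A` containing `s`. -/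
def mult {n : ℕ} (A : Fin n → Fin n → ℕ) (s : ℕ) : ℕ :=
  (Finset.univ.filter fun p : Fin n × Fin n => A p.1 p.2 = s).card

/-- The number of distinct symbols of `A`. -/
def numSymbols {n : ℕ} (A : Fin n → Fin n → ℕ) : ℕ :=
  (Finset.image (fun p : Fin n × Fin n => A p.1 p.2) Finset.univ).card

/-- A transversal: `n` cells, one per row/column, with pairwise distinct symbols. -/
def HasTransversal {n : ℕ} (A : Fin n → Fin n → ℕ) : Prop :=
  ∃ σ : Equiv.Perm (Fin n), Function.Injective fun i => A i (σ i)

theorem stmt_4 (n : ℕ) (A : Fin n → Fin n → ℕ) (hA : IsGLS A)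
    (R : Finset (Fin n)) (hR : 2 * R.card ≤ n + 1) :
    ∃ f : Fin n → Fin n, Set.InjOn f ↑R ∧
      Set.InjOn (fun i => A i (f i)) ↑R := by
  classical
  induction R using Finset.induction_on with
  | empty => exact ⟨id, by simp, by simp⟩
  | @insert i R hi ih =>
    rw [Finset.card_insert_of_notMem hi] at hR
    obtain ⟨f, hf1, hf2⟩ := ih (by omega)
    set S : Finset ℕ := R.image (fun k => A k (f k)) with hS
    set bad : Finset (Fin n) :=
      R.image f ∪ Finset.univ.filter (fun j => A i j ∈ S) with hbad
    have hcard : bad.card < n := by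
      have h1 : (R.image f).card ≤ R.card := Finset.card_image_le
      have h2 : (Finset.univ.filter (fun j => A i j ∈ S)).card ≤ S.card := by
        apply Finset.card_le_card_of_injOn (fun j => A i j)
        · intro j hj; simpa using (Finset.mem_filter.mp hj).2
        · intro a _ b _ h; exact hA.1 i h
      have h3 : S.card ≤ R.card := Finset.card_image_le
      calc bad.card ≤ (R.image f).card
            + (Finset.univ.filter (fun j => A i j ∈ S)).card := Finset.card_union_le _ _
        _ < n := by omega
    have hex : ∃ j, j ∉ bad := by
      by_contra h
      push_neg at h
      have : bad = Finset.univ := Finset.eq_univ_of_forall h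
      rw [this, Finset.card_univ, Fintype.card_fin] at hcard
      omega
    obtain ⟨j, hj⟩ := hex
    rw [hbad, Finset.mem_union, not_or, Finset.mem_filter] at hj
    have hjc : ∀ k ∈ R, f k ≠ j := by
      intro k hk hkj
      exact hj.1 (Finset.mem_image.mpr ⟨k, hk, hkj⟩)
    have hjs : A i j ∉ S := fun h => hj.2 ⟨Finset.mem_univ _, h⟩
    have hjs' : ∀ k ∈ R, A k (f k) ≠ A i j := by
      intro k hk h
      exact hjs (Finset.mem_image.mpr ⟨k, hk, h⟩)
    have hne : ∀ a : Fin n, a ∈ R → a ≠ i := by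
      intro a ha h; subst h; exact hi ha
    refine ⟨Function.update f i j, ?_, ?_⟩
    · intro a ha b hb hab
      simp only [Finset.coe_insert, Set.mem_insert_iff, Finset.mem_coe] at ha hb
      rcases ha with rfl | ha <;> rcases hb with rfl | hb
      · rfl
      · rw [Function.update_self, Function.update_of_ne (hne b hb)] at hab
        exact absurd hab.symm (hjc b hb)
      · rw [Function.update_self, Function.update_of_ne (hne a ha)] at hab
        exact absurd hab (hjc a ha)
      · rw [Function.update_of_ne (hne a ha), Function.update_of_ne (hne b hb)] at hab
        exact hf1 ha hb hab
    · intro a ha b hb hab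
      simp only [Finset.coe_insert, Set.mem_insert_iff, Finset.mem_coe] at ha hb
      simp only at hab
      rcases ha with rfl | ha <;> rcases hb with rfl | hb
      · rfl
      · rw [Function.update_self, Function.update_of_ne (hne b hb)] at hab
        exact absurd hab.symm (hjs' b hb)
      · rw [Function.update_self, Function.update_of_ne (hne a ha)] at hab
        exact absurd hab (hjs' a ha)
      · rw [Function.update_of_ne (hne a ha), Function.update_of_ne (hne b hb)] at hab
        exact hf2 ha hb hab
end

section
/- Let A be a generalized Latin square of order n, and let P be a set of p rows and Q a set of q columns with q ≤ p ≤ (n+1)/2 and q ≤ p/2. Then there exists a partial transversal of size p that covers all rows of P and all columns of Q (every row of P and every column of Q contains a cell of the partial transversal). -/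
/-- `T` is a partial transversal of `A`: its cells lie in pairwise distinct rows,
pairwise distinct columns, and carry pairwise distinct symbols. -/
def IsPartialTransversal {n : ℕ} (A : Fin n → Fin n → ℕ) (T : Finset (Fin n × Fin n)) : Prop :=
  Set.InjOn (fun x : Fin n × Fin n => x.1) ↑T ∧ Set.InjOn (fun x : Fin n × Fin n => x.2) ↑T ∧ Set.InjOn (fun x : Fin n × Fin n => A x.1 x.2) ↑T

lemma injOn_insert' {α β : Type*} {f : α → β} {s : Set α} {a : α}
    (h : Set.InjOn f s) (ha : ∀ x ∈ s, f x ≠ f a) : Set.InjOn f (insert a s) := by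
  intro x hx y hy hxy
  rcases hx with rfl | hx <;> rcases hy with rfl | hy
  · rfl
  · exact absurd hxy.symm (ha y hy)
  · exact absurd hxy (ha x hx)
  · exact h hx hy hxy

lemma pt_insert {n : ℕ} {A : Fin n → Fin n → ℕ} {T : Finset (Fin n × Fin n)} {c : Fin n × Fin n}
    (hT : IsPartialTransversal A T)
    (h1 : ∀ x ∈ T, x.1 ≠ c.1) (h2 : ∀ x ∈ T, x.2 ≠ c.2)
    (h3 : ∀ x ∈ T, A x.1 x.2 ≠ A c.1 c.2) :
    IsPartialTransversal A (insert c T) := by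
  obtain ⟨hr, hc, hs⟩ := hT
  rw [IsPartialTransversal, Finset.coe_insert]
  exact ⟨injOn_insert' hr h1, injOn_insert' hc h2, injOn_insert' hs h3⟩

lemma card_filter_col {n : ℕ} {A : Fin n → Fin n → ℕ} (hA : IsGLS A) (j : Fin n) (c : ℕ) :
    (Finset.univ.filter fun i : Fin n => A i j = c).card ≤ 1 := by
  apply Finset.card_le_one.mpr
  intro a ha b hb
  simp only [Finset.mem_filter] at ha hb
  exact hA.2 j (ha.2.trans hb.2.symm)

lemma card_filter_row {n : ℕ} {A : Fin n → Fin n → ℕ} (hA : IsGLS A) (i : Fin n) (c : ℕ) :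
    (Finset.univ.filter fun j : Fin n => A i j = c).card ≤ 1 := by
  apply Finset.card_le_one.mpr
  intro a ha b hb
  simp only [Finset.mem_filter] at ha hb
  exact hA.1 i (ha.2.trans hb.2.symm)

/-- Stage 1: cover the columns of Q. -/
lemma lemA {n : ℕ} {A : Fin n → Fin n → ℕ} (hA : IsGLS A) (P : Finset (Fin n)) :
    ∀ Q' : Finset (Fin n), 2 * Q'.card ≤ P.card →
    ∃ T : Finset (Fin n × Fin n), IsPartialTransversal A T ∧ T.card = Q'.card ∧
      (∀ x ∈ T, x.1 ∈ P ∧ x.2 ∈ Q') ∧ (∀ j ∈ Q', ∃ x ∈ T, x.2 = j) := by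
  intro Q'
  induction Q' using Finset.induction_on with
  | empty =>
    intro _
    exact ⟨∅, ⟨by simp [Set.injOn_empty], by simp [Set.injOn_empty], by simp [Set.injOn_empty]⟩,
      by simp, by simp, by simp⟩
  | @insert j Q' hj ih =>
    intro hcard
    rw [Finset.card_insert_of_notMem hj] at hcard
    obtain ⟨T, hpt, hTcard, hmem, hcov⟩ := ih (by omega)
    set bad : Finset (Fin n) :=
      T.biUnion (fun x => insert x.1 (Finset.univ.filter fun i : Fin n => A i j = A x.1 x.2))
      with hbad
    have hbadcard : bad.card ≤ 2 * T.card := by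
      calc bad.card ≤ ∑ x ∈ T, (insert x.1 (Finset.univ.filter
            fun i : Fin n => A i j = A x.1 x.2)).card := Finset.card_biUnion_le
        _ ≤ ∑ _x ∈ T, 2 := by
            apply Finset.sum_le_sum
            intro x _
            calc (insert x.1 (Finset.univ.filter fun i : Fin n => A i j = A x.1 x.2)).card
                ≤ (Finset.univ.filter fun i : Fin n => A i j = A x.1 x.2).card + 1 :=
                  Finset.card_insert_le _ _
              _ ≤ 2 := by have := card_filter_col hA j (A x.1 x.2); omega
        _ = 2 * T.card := by rw [Finset.sum_const, smul_eq_mul]; ring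
    have hlt : bad.card < P.card := by omega
    obtain ⟨i, hiP, hibad⟩ : ∃ i ∈ P, i ∉ bad := by
      by_contra h
      push_neg at h
      exact absurd (Finset.card_le_card h) (by omega)
    have hrow : ∀ x ∈ T, x.1 ≠ i := by
      intro x hx he
      exact hibad (Finset.mem_biUnion.mpr ⟨x, hx, he ▸ Finset.mem_insert_self _ _⟩)
    have hcol : ∀ x ∈ T, x.2 ≠ j := by
      intro x hx he
      exact hj (he ▸ (hmem x hx).2)
    have hsym : ∀ x ∈ T, A x.1 x.2 ≠ A i j := by
      intro x hx he
      apply hibad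
      exact Finset.mem_biUnion.mpr ⟨x, hx, Finset.mem_insert_of_mem
        (Finset.mem_filter.mpr ⟨Finset.mem_univ _, he.symm⟩)⟩
    have hnotmem : (i, j) ∉ T := fun h => hrow _ h rfl
    refine ⟨insert (i, j) T, pt_insert hpt hrow hcol hsym, ?_, ?_, ?_⟩
    · rw [Finset.card_insert_of_notMem hnotmem, hTcard,
        Finset.card_insert_of_notMem hj]
    · intro x hx
      rcases Finset.mem_insert.mp hx with rfl | hx
      · exact ⟨hiP, Finset.mem_insert_self _ _⟩
      · exact ⟨(hmem x hx).1, Finset.mem_insert_of_mem (hmem x hx).2⟩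
    · intro j' hj'
      rcases Finset.mem_insert.mp hj' with rfl | hj'
      · exact ⟨(i, j'), Finset.mem_insert_self _ _, rfl⟩
      · obtain ⟨x, hx, hxe⟩ := hcov j' hj'
        exact ⟨x, Finset.mem_insert_of_mem hx, hxe⟩

/-- Stage 2: extend to cover rows R. -/
lemma lemB {n : ℕ} {A : Fin n → Fin n → ℕ} (hA : IsGLS A) :
    ∀ R : Finset (Fin n), ∀ T : Finset (Fin n × Fin n),
    IsPartialTransversal A T → (∀ x ∈ T, x.1 ∉ R) →
    2 * (T.card + R.card) ≤ n + 1 →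
    ∃ T', T ⊆ T' ∧ T'.card = T.card + R.card ∧ IsPartialTransversal A T' ∧
      ∀ i ∈ R, ∃ x ∈ T', x.1 = i := by
  intro R
  induction R using Finset.induction_on with
  | empty =>
    intro T hpt _ _
    exact ⟨T, Finset.Subset.refl _, by simp, hpt, by simp⟩
  | @insert i R hi ih =>
    intro T hpt hdisj hbound
    rw [Finset.card_insert_of_notMem hi] at hbound
    set bad : Finset (Fin n) :=
      T.biUnion (fun x => insert x.2 (Finset.univ.filter fun j : Fin n => A i j = A x.1 x.2))
      with hbad
    have hbadcard : bad.card ≤ 2 * T.card := by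
      calc bad.card ≤ ∑ x ∈ T, (insert x.2 (Finset.univ.filter
            fun j : Fin n => A i j = A x.1 x.2)).card := Finset.card_biUnion_le
        _ ≤ ∑ _x ∈ T, 2 := by
            apply Finset.sum_le_sum
            intro x _
            calc (insert x.2 (Finset.univ.filter fun j : Fin n => A i j = A x.1 x.2)).card
                ≤ (Finset.univ.filter fun j : Fin n => A i j = A x.1 x.2).card + 1 :=
                  Finset.card_insert_le _ _
              _ ≤ 2 := by have := card_filter_row hA i (A x.1 x.2); omega
        _ = 2 * T.card := by rw [Finset.sum_const, smul_eq_mul]; ring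
    have hlt : bad.card < n := by omega
    obtain ⟨j, _, hjbad⟩ : ∃ j ∈ (Finset.univ : Finset (Fin n)), j ∉ bad := by
      by_contra h
      push_neg at h
      have := Finset.card_le_card (fun x hx => h x hx)
      rw [Finset.card_univ, Fintype.card_fin] at this
      omega
    have hrow : ∀ x ∈ T, x.1 ≠ i := by
      intro x hx he
      exact hdisj x hx (he ▸ Finset.mem_insert_self i R)
    have hcol : ∀ x ∈ T, x.2 ≠ j := by
      intro x hx he
      exact hjbad (Finset.mem_biUnion.mpr ⟨x, hx, he ▸ Finset.mem_insert_self _ _⟩)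
    have hsym : ∀ x ∈ T, A x.1 x.2 ≠ A i j := by
      intro x hx he
      exact hjbad (Finset.mem_biUnion.mpr ⟨x, hx, Finset.mem_insert_of_mem
        (Finset.mem_filter.mpr ⟨Finset.mem_univ _, he.symm⟩)⟩)
    have hnotmem : (i, j) ∉ T := fun h => hrow _ h rfl
    have hpt1 : IsPartialTransversal A (insert (i, j) T) := pt_insert hpt hrow hcol hsym
    have hdisj1 : ∀ x ∈ insert (i, j) T, x.1 ∉ R := by
      intro x hx
      rcases Finset.mem_insert.mp hx with rfl | hx
      · exact hi
      · exact fun h => hdisj x hx (Finset.mem_insert_of_mem h)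
    obtain ⟨T', hsub, hcard', hpt', hcov'⟩ := ih (insert (i, j) T) hpt1 hdisj1
      (by rw [Finset.card_insert_of_notMem hnotmem]; omega)
    refine ⟨T', fun x hx => hsub (Finset.mem_insert_of_mem hx), ?_, hpt', ?_⟩
    · rw [hcard', Finset.card_insert_of_notMem hnotmem,
        Finset.card_insert_of_notMem hi]
      ring
    · intro i' hi'
      rcases Finset.mem_insert.mp hi' with rfl | hi'
      · exact ⟨(i', j), hsub (Finset.mem_insert_self _ _), rfl⟩
      · exact hcov' i' hi'

theorem stmt_5 (n : ℕ) (A : Fin n → Fin n → ℕ) (hA : IsGLS A)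
    (P Q : Finset (Fin n)) (hqp : Q.card ≤ P.card) (hp : 2 * P.card ≤ n + 1)
    (hq : 2 * Q.card ≤ P.card) :
    ∃ T : Finset (Fin n × Fin n), T.card = P.card ∧ IsPartialTransversal A T ∧
      (∀ i ∈ P, ∃ x ∈ T, x.1 = i) ∧ (∀ j ∈ Q, ∃ x ∈ T, x.2 = j) := by
  obtain ⟨T₀, hpt0, hcard0, hmem0, hcov0⟩ := lemA hA P Q hq
  set rows := T₀.image Prod.fst with hrows
  have hrowscard : rows.card = T₀.card := Finset.card_image_of_injOn hpt0.1
  have hrowsP : rows ⊆ P := by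
    intro i hi
    obtain ⟨x, hx, rfl⟩ := Finset.mem_image.mp hi
    exact (hmem0 x hx).1
  set R := P \ rows with hR
  have hRcard : R.card = P.card - Q.card := by
    rw [hR, Finset.card_sdiff_of_subset hrowsP, hrowscard, hcard0]
  have hdisj : ∀ x ∈ T₀, x.1 ∉ R := by
    intro x hx h
    exact (Finset.mem_sdiff.mp h).2 (Finset.mem_image_of_mem Prod.fst hx)
  have hsum : T₀.card + R.card = P.card := by
    rw [hcard0, hRcard]; omega
  obtain ⟨T', hsub, hcard', hpt', hcov'⟩ := lemB hA R T₀ hpt0 hdisj (by omega)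
  refine ⟨T', by omega, hpt', ?_, ?_⟩
  · intro i hiP
    by_cases h : i ∈ rows
    · obtain ⟨x, hx, rfl⟩ := Finset.mem_image.mp h
      exact ⟨x, hsub hx, rfl⟩
    · exact hcov' i (Finset.mem_sdiff.mpr ⟨hiP, h⟩)
  · intro j hj
    obtain ⟨x, hx, hxe⟩ := hcov0 j hj
    exact ⟨x, hsub hx, hxe⟩
end

section
/- In a generalized Latin square of order n with at least 0.75·n² distinct symbols, the number of rows all of whose entries are repeated symbols is at most n/2. -/
theorem stmt_8 (n : ℕ) (A : Fin n → Fin n → ℕ) (hA : IsGLS A)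
    (hsym : (0.75 : ℝ) * (n : ℝ) ^ 2 ≤ (numSymbols A : ℝ)) :
    ((Finset.univ.filter fun i : Fin n => ∀ j : Fin n, 2 ≤ mult A (A i j)).card : ℝ)
      ≤ (n : ℝ) / 2 := by
  classical
  rcases Nat.eq_zero_or_pos n with hn | hn
  · subst hn
    simp
  set F := Finset.univ.filter fun i : Fin n => ∀ j : Fin n, 2 ≤ mult A (A i j) with hF
  set Sym := Finset.image (fun p : Fin n × Fin n => A p.1 p.2) Finset.univ with hSymdef
  set Sing := Sym.filter (fun s => mult A s = 1) with hSingdef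
  -- total count of cells
  have htot : (Finset.univ : Finset (Fin n × Fin n)).card = ∑ s ∈ Sym, mult A s := by
    apply Finset.card_eq_sum_card_fiberwise
    intro p _
    exact Finset.mem_image_of_mem _ (Finset.mem_univ p)
  have hcard : (Finset.univ : Finset (Fin n × Fin n)).card = n ^ 2 := by
    simp [sq]
  -- every symbol in Sym has multiplicity ≥ 1
  have hpos : ∀ s ∈ Sym, 1 ≤ mult A s := by
    intro s hs
    rw [hSymdef, Finset.mem_image] at hs
    obtain ⟨p, _, hp⟩ := hs
    have : p ∈ Finset.univ.filter fun q : Fin n × Fin n => A q.1 q.2 = s :=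
      Finset.mem_filter.mpr ⟨Finset.mem_univ p, hp⟩
    exact Finset.card_pos.mpr ⟨p, this⟩
  -- Key 1 : 2 * numSymbols ≤ n^2 + Sing.card
  have key1 : 2 * numSymbols A ≤ n ^ 2 + Sing.card := by
    have hsplit : ∑ s ∈ Sym, mult A s
        = ∑ s ∈ Sym.filter (fun s => mult A s = 1), mult A s
          + ∑ s ∈ Sym.filter (fun s => ¬ mult A s = 1), mult A s :=
      (Finset.sum_filter_add_sum_filter_not _ _ _).symm
    have h1 : ∑ s ∈ Sym.filter (fun s => mult A s = 1), mult A s = Sing.card := by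
      rw [hSingdef]
      rw [Finset.card_eq_sum_ones]
      apply Finset.sum_congr rfl
      intro s hs
      exact (Finset.mem_filter.mp hs).2
    have h2 : 2 * (Sym.filter (fun s => ¬ mult A s = 1)).card
        ≤ ∑ s ∈ Sym.filter (fun s => ¬ mult A s = 1), mult A s := by
      rw [Finset.card_eq_sum_ones, Finset.mul_sum]
      apply Finset.sum_le_sum
      intro s hs
      rcases Finset.mem_filter.mp hs with ⟨hsSym, hne⟩
      have := hpos s hsSym
      omega
    have hcards : Sing.card + (Sym.filter (fun s => ¬ mult A s = 1)).card = Sym.card := by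
      rw [hSingdef]
      exact Finset.card_filter_add_card_filter_not _
    have hns : numSymbols A = Sym.card := rfl
    omega
  -- Key 2 : F.card * n + Sing.card ≤ n^2
  have key2 : F.card * n + Sing.card ≤ n ^ 2 := by
    set C := Finset.univ.filter fun p : Fin n × Fin n => mult A (A p.1 p.2) = 1 with hCdef
    -- C.card = Sing.card
    have hCcard : C.card = Sing.card := by
      have hfib : C.card = ∑ s ∈ Sing, (C.filter fun p => A p.1 p.2 = s).card := by
        apply Finset.card_eq_sum_card_fiberwise
        intro p hp
        rw [hCdef, Finset.mem_coe, Finset.mem_filter] at hp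
        rw [hSingdef, Finset.mem_coe, Finset.mem_filter]
        exact ⟨Finset.mem_image_of_mem _ (Finset.mem_univ p), hp.2⟩
      rw [hfib, Finset.card_eq_sum_ones Sing]
      apply Finset.sum_congr rfl
      intro s hs
      rw [hSingdef, Finset.mem_filter] at hs
      have heq : C.filter (fun p => A p.1 p.2 = s)
          = Finset.univ.filter fun p : Fin n × Fin n => A p.1 p.2 = s := by
        ext p
        simp only [hCdef, Finset.mem_filter, Finset.mem_univ, true_and]
        constructor
        · rintro ⟨_, h⟩; exact h
        · intro h; exact ⟨by rw [h]; exact hs.2, h⟩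
      rw [heq]
      exact hs.2
    -- C is contained in cells with non-full rows
    have hsub : C ⊆ Fᶜ ×ˢ Finset.univ := by
      intro p hp
      rw [hCdef, Finset.mem_filter] at hp
      rw [Finset.mem_product]
      refine ⟨?_, Finset.mem_univ _⟩
      rw [Finset.mem_compl, hF, Finset.mem_filter]
      push_neg
      intro _
      exact ⟨p.2, by omega⟩
    have hCle : C.card ≤ Fᶜ.card * n := by
      have := Finset.card_le_card hsub
      rwa [Finset.card_product, Finset.card_univ, Fintype.card_fin] at this
    have hcompl : F.card + Fᶜ.card = n := by
      set_option linter.unnecessarySimpa false in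
      have := Finset.card_add_card_compl F
      simpa using this
    have : F.card * n + Fᶜ.card * n = n ^ 2 := by
      rw [← add_mul, hcompl, sq]
    omega
  -- combine over ℝ
  have key1R : 2 * (numSymbols A : ℝ) ≤ (n : ℝ) ^ 2 + (Sing.card : ℝ) := by
    exact_mod_cast key1
  have key2R : (F.card : ℝ) * n + (Sing.card : ℝ) ≤ (n : ℝ) ^ 2 := by
    exact_mod_cast key2
  have hnR : (0 : ℝ) < n := by exact_mod_cast hn
  have hmain : (F.card : ℝ) * n ≤ ((n : ℝ) / 2) * n := by nlinarith
  exact le_of_mul_le_mul_right hmain hnR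
end

section
/- If M is a rainbow perfect matching in the properly edge-colored K_{n,n} constructed from a proper edge-coloring c of K_n (where edge u_i w_j for i≠j gets color c(v_i v_j) and all edges u_i w_i get one extra common color), then the edge set {v_i v_j : u_i w_j ∈ M, i ≠ j} in K_n is rainbow and every vertex of K_n covered by it has degree at most 2, and it has at least n−1 edges. -/
/-- From a proper edge-coloring `c` of `K_n` build the coloring of `K_{n,n}` where
`u_i w_j` (`i ≠ j`) gets `c i j` and every `u_i w_i` gets one new color `ν`.
A rainbow perfect matching `M` of `K_{n,n}` then yields in `K_n` an edge set
`{v_i v_{M i} : M i ≠ i}` which is rainbow, has every vertex of degree at most 2,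
and has at least `n - 1` edges. -/
theorem stmt_13 (n : ℕ) (c : Fin n → Fin n → ℕ)
    (hsymm : ∀ i j : Fin n, c i j = c j i)
    (hproper : ∀ i j k : Fin n, i ≠ j → i ≠ k → j ≠ k → c i j ≠ c i k)
    (ν : ℕ) (hν : ∀ i j : Fin n, i ≠ j → c i j ≠ ν)
    (M : Equiv.Perm (Fin n))
    (hrainbow : Function.Injective fun i : Fin n =>
      if i = M i then ν else c i (M i)) :
    -- the derived edge set in `K_n` is rainbow (edges `{i, M i}` with `M i ≠ i`):
    (∀ i j : Fin n, M i ≠ i → M j ≠ j → c i (M i) = c j (M j) →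
        i = j ∨ (i = M j ∧ j = M i)) ∧
    -- every vertex has degree at most 2 in it:
    (∀ k : Fin n,
        (Finset.univ.filter fun i : Fin n => M i ≠ i ∧ (i = k ∨ M i = k)).card ≤ 2) ∧
    -- it has at least `n - 1` edges:
    n - 1 ≤ (Finset.univ.filter fun i : Fin n => M i ≠ i).card := by
  refine ⟨?_, ?_, ?_⟩
  · intro i j hi hj hc
    left
    have := hrainbow (a₁ := i) (a₂ := j)
    simp only [if_neg (Ne.symm hi), if_neg (Ne.symm hj)] at this
    exact this hc
  · intro k
    have hsub : (Finset.univ.filter fun i : Fin n => M i ≠ i ∧ (i = k ∨ M i = k))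
        ⊆ {k, M.symm k} := by
      intro i hi
      simp only [Finset.mem_filter] at hi
      rcases hi.2.2 with h | h
      · simp [h]
      · have : i = M.symm k := by
          apply M.injective; simp [h]
        simp [this]
    calc _ ≤ ({k, M.symm k} : Finset (Fin n)).card := Finset.card_le_card hsub
      _ ≤ 2 := Finset.card_insert_le _ _ |>.trans (by simp)
  · have hfix : (Finset.univ.filter fun i : Fin n => M i = i).card ≤ 1 := by
      apply Finset.card_le_one.2
      intro a ha b hb
      simp only [Finset.mem_filter] at ha hb
      have := hrainbow (a₁ := a) (a₂ := b)
      simp only [if_pos ha.2.symm, if_pos hb.2.symm] at this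
      exact this trivial
    have hsplit : (Finset.univ.filter fun i : Fin n => M i ≠ i).card
        + (Finset.univ.filter fun i : Fin n => M i = i).card = n := by
      have := Finset.card_filter_add_card_filter_not
        (s := Finset.univ) (p := fun i : Fin n => M i = i)
      simp only [not_not, ne_eq, Finset.card_univ, Fintype.card_fin] at this ⊢
      omega
    omega
end
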